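/- arXiv:2204.08416 — 2 statements merged into one kernel-verified Lean document; each statement's English description precedes it below -/
import Mathlib

section
/- For simple graphs G and H and vertices u ∈ V(G), v ∈ V(H), the number of triangles in G × H incident to the vertex (u,v) equals 2 · t_G(u) · t_H(v), where t_G(u) denotes the number of triangles of G incident to u. -/
variable {α β : Type*}

/-- Tensor (categorical) product of simple graphs. -/
def tensorProdG (G : SimpleGraph α) (H : SimpleGraph β) : SimpleGraph (α × β) where
  Adj x y := G.Adj x.1 y.1 ∧ H.Adj x.2 y.2
  symm := ⟨fun _ _ h => ⟨h.1.symm, h.2.symm⟩⟩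
  loopless := ⟨fun x h => G.loopless.irrefl x.1 h.1⟩

instance (G : SimpleGraph α) (H : SimpleGraph β) [DecidableRel G.Adj] [DecidableRel H.Adj] :
    DecidableRel (tensorProdG G H).Adj := fun _ _ => instDecidableAnd

/-- Number of triangles incident to `u`: edges of the induced neighborhood. -/
noncomputable def triCount (G : SimpleGraph α) [Fintype α] (u : α) : ℕ :=
  Nat.card (SimpleGraph.induce (G.neighborSet u) G).edgeSet

/-- Local clustering coefficient. -/
noncomputable def locCc (G : SimpleGraph α) [Fintype α] [DecidableRel G.Adj] (u : α) : ℝ :=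
  if 2 ≤ G.degree u then (triCount G u : ℝ) / ((G.degree u).choose 2) else 0

/-- Global clustering coefficient. -/
noncomputable def globCc (G : SimpleGraph α) [Fintype α] [DecidableRel G.Adj] : ℝ :=
  (∑ v, locCc G v) / (Fintype.card α)

/-- Minimum degree of the induced neighborhood of `u`. -/
noncomputable def nbrMinDeg (G : SimpleGraph α) [Fintype α] [DecidableRel G.Adj] (u : α) : ℕ :=
  (SimpleGraph.induce (G.neighborSet u) G).minDegree

/-- Average degree, as a real number. -/
noncomputable def avgDeg (G : SimpleGraph α) [Fintype α] [DecidableRel G.Adj] : ℝ :=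
  (∑ v, (G.degree v : ℝ)) / (Fintype.card α)


variable [Fintype α] [Fintype β] (G : SimpleGraph α) (H : SimpleGraph β)
  [DecidableRel G.Adj] [DecidableRel H.Adj]

lemma dart_ncard {V : Type*} [Fintype V] (Γ : SimpleGraph V) [DecidableRel Γ.Adj] :
    Nat.card Γ.Dart = 2 * Nat.card Γ.edgeSet := by
  rw [Nat.card_eq_fintype_card, Nat.card_eq_fintype_card, ← SimpleGraph.edgeFinset_card,
    SimpleGraph.dart_card_eq_twice_card_edges]

theorem tensor_triCount (u : α) (v : β) :
    triCount (tensorProdG G H) (u, v) = 2 * triCount G u * triCount H v := by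
  classical
  set G' := SimpleGraph.induce (G.neighborSet u) G with hG'
  set H' := SimpleGraph.induce (H.neighborSet v) H with hH'
  set T := SimpleGraph.induce ((tensorProdG G H).neighborSet (u, v)) (tensorProdG G H) with hT
  have e : T.Dart ≃ G'.Dart × H'.Dart :=
    { toFun := fun d =>
        (⟨(⟨d.fst.1.1, d.fst.2.1⟩, ⟨d.snd.1.1, d.snd.2.1⟩), d.adj.1⟩,
         ⟨(⟨d.fst.1.2, d.fst.2.2⟩, ⟨d.snd.1.2, d.snd.2.2⟩), d.adj.2⟩)
      invFun := fun p =>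
        ⟨(⟨(p.1.fst.1, p.2.fst.1), ⟨p.1.fst.2, p.2.fst.2⟩⟩,
          ⟨(p.1.snd.1, p.2.snd.1), ⟨p.1.snd.2, p.2.snd.2⟩⟩),
          ⟨p.1.adj, p.2.adj⟩⟩
      left_inv := fun d => rfl
      right_inv := fun p => rfl }
  have hd : Nat.card T.Dart = Nat.card G'.Dart * Nat.card H'.Dart := by
    rw [Nat.card_congr e, Nat.card_prod]
  rw [dart_ncard, dart_ncard, dart_ncard] at hd
  have : 2 * Nat.card T.edgeSet = 2 * (2 * Nat.card G'.edgeSet * Nat.card H'.edgeSet) := by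
    rw [hd]; ring
  have h2 := Nat.eq_of_mul_eq_mul_left (by norm_num : 0 < 2) this
  simpa [triCount, hG', hH', hT] using h2
end

section
/- Let G be a strongly regular graph with parameters (n₁, d_G, μ₁^G, μ₂^G) and H a strongly regular graph with parameters (n₂, d_H, μ₁^H, μ₂^H), with d_G, d_H ≥ 2. Then Cc(G × H) = μ₁^G · μ₁^H / (d_G · d_H − 1). -/
variable {α β : Type*}

set_option linter.unusedSectionVars false

section helpers
variable [Fintype α] [Fintype β] (G : SimpleGraph α) (H : SimpleGraph β)
  [DecidableRel G.Adj] [DecidableRel H.Adj]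

lemma tensor_neighborFinset (x : α × β) :
    (tensorProdG G H).neighborFinset x = (G.neighborFinset x.1) ×ˢ (H.neighborFinset x.2) := by
  ext y
  rw [SimpleGraph.mem_neighborFinset]
  simp [SimpleGraph.mem_neighborFinset, Finset.mem_product, tensorProdG]

lemma tensor_commonNeighbors (x y : α × β) :
    (tensorProdG G H).commonNeighbors x y
      = (G.commonNeighbors x.1 y.1) ×ˢ (H.commonNeighbors x.2 y.2) := by
  ext z
  simp [SimpleGraph.commonNeighbors, tensorProdG, Set.mem_prod]
  tauto

lemma tensor_card_commonNeighbors (x y : α × β) :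
    Nat.card ((tensorProdG G H).commonNeighbors x y)
      = Nat.card (G.commonNeighbors x.1 y.1) * Nat.card (H.commonNeighbors x.2 y.2) := by
  rw [tensor_commonNeighbors]
  rw [Nat.card_congr (Equiv.Set.prod _ _), Nat.card_prod]

end helpers

/-- counting lemma: in a graph where every neighbor of x has μ common nbrs with x. -/
lemma two_mul_triCount (T : SimpleGraph γ) [Fintype γ] [DecidableRel T.Adj] (x : γ) (μ : ℕ)
    (h : ∀ w, T.Adj x w → Nat.card (T.commonNeighbors x w) = μ) :
    2 * triCount T x = T.degree x * μ := by
  classical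
  set s := T.neighborSet x with hs
  set I := SimpleGraph.induce s T with hI
  have hdeg : ∀ w : s, I.degree w = μ := by
    intro w
    have hadj : T.Adj x ↑w := w.2
    rw [← h ↑w hadj]
    rw [← SimpleGraph.card_neighborSet_eq_degree]
    rw [← Nat.card_eq_fintype_card]
    apply Nat.card_congr
    refine ⟨fun z => ⟨↑↑z, ?_, ?_⟩, fun z => ⟨⟨z, z.2.1⟩, ?_⟩, fun z => rfl, fun z => rfl⟩
    · exact (z : s).2
    · exact z.2
    · exact z.2.2
  have := SimpleGraph.sum_degrees_eq_twice_card_edges I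
  rw [Finset.sum_congr rfl (fun w _ => hdeg w)] at this
  simp only [Finset.sum_const, Finset.card_univ, smul_eq_mul] at this
  rw [triCount, Nat.card_eq_fintype_card, ← SimpleGraph.edgeFinset_card]
  rw [← this, SimpleGraph.card_neighborSet_eq_degree]

theorem tensor_srg_globCc [Fintype α] [Fintype β] [Nonempty α] [Nonempty β]
    (G : SimpleGraph α) (H : SimpleGraph β) [DecidableRel G.Adj] [DecidableRel H.Adj]
    (n₁ n₂ dG dH μG₁ μG₂ μH₁ μH₂ : ℕ)
    (hG : G.IsSRGWith n₁ dG μG₁ μG₂) (hH : H.IsSRGWith n₂ dH μH₁ μH₂)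
    (hdG : 2 ≤ dG) (hdH : 2 ≤ dH) :
    globCc (tensorProdG G H) = (μG₁ : ℝ) * (μH₁ : ℝ) / ((dG : ℝ) * (dH : ℝ) - 1) := by
  set T := tensorProdG G H with hT
  have hdeg : ∀ x, T.degree x = dG * dH := by
    intro x
    show (tensorProdG G H).degree x = dG * dH
    rw [SimpleGraph.degree, tensor_neighborFinset, Finset.card_product]
    rw [← SimpleGraph.degree, ← SimpleGraph.degree, hG.regular x.1, hH.regular x.2]
  have hμ : ∀ x w, T.Adj x w → Nat.card (T.commonNeighbors x w) = μG₁ * μH₁ := by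
    intro x w hxw
    rw [show T = tensorProdG G H from rfl] at hxw ⊢
    rw [tensor_card_commonNeighbors, Nat.card_eq_fintype_card, Nat.card_eq_fintype_card,
        hG.of_adj _ _ hxw.1, hH.of_adj _ _ hxw.2]
  have htri : ∀ x, 2 * triCount T x = (dG * dH) * (μG₁ * μH₁) := by
    intro x
    rw [two_mul_triCount T x _ (hμ x), hdeg x]
  have hd4 : 4 ≤ dG * dH := by nlinarith
  have hd2 : 2 ≤ dG * dH := by omega
  have hne : ((dG : ℝ) * (dH : ℝ)) - 1 ≠ 0 := by
    have : (4 : ℝ) ≤ (dG : ℝ) * (dH : ℝ) := by exact_mod_cast (by exact_mod_cast hd4 : (4:ℝ) ≤ ((dG*dH : ℕ) : ℝ))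
    linarith
  have hdne : ((dG : ℝ) * (dH : ℝ)) ≠ 0 := by
    have : (4 : ℝ) ≤ (dG : ℝ) * (dH : ℝ) := by exact_mod_cast (by exact_mod_cast hd4 : (4:ℝ) ≤ ((dG*dH : ℕ) : ℝ))
    linarith
  have hloc : ∀ x, locCc T x = (μG₁ : ℝ) * (μH₁ : ℝ) / ((dG : ℝ) * (dH : ℝ) - 1) := by
    intro x
    rw [locCc, hdeg x, if_pos hd2]
    have h1 : (triCount T x : ℝ) = (dG : ℝ) * (dH : ℝ) * ((μG₁ : ℝ) * (μH₁ : ℝ)) / 2 := by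
      have := htri x
      have : (2 : ℝ) * (triCount T x : ℝ) = ((dG * dH) * (μG₁ * μH₁) : ℕ) := by exact_mod_cast this
      push_cast at this
      linarith
    rw [h1, Nat.cast_choose_two]
    push_cast
    field_simp
  rw [globCc, Finset.sum_congr rfl (fun x _ => hloc x)]
  rw [Finset.sum_const, Finset.card_univ, nsmul_eq_mul]
  have hc : (Fintype.card (α × β) : ℝ) ≠ 0 := Nat.cast_ne_zero.mpr Fintype.card_ne_zero
  exact mul_div_cancel_left₀ _ hc
end
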